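/- arXiv:2001.08645 — 10 statements merged into one kernel-verified Lean document; each statement's English description precedes it below -/
import Mathlib

section
/- Fix M > 0 and ℓ > 12M². Then the critical values of the Schwarzschild effective potential are given by E_ℓ^Sch(r_min^Sch(ℓ)) = 8/9 + (ℓ − 12M²)/(9M·r_min^Sch(ℓ)) and E_ℓ^Sch(r_max^Sch(ℓ)) = 8/9 + (ℓ − 12M²)/(9M·r_max^Sch(ℓ)). -/
/-- The Schwarzschild effective potential `E_ℓ^Sch(r) = (1 - 2M/r)(1 + ℓ/r²)`. -/
noncomputable def Esch (M ℓ r : ℝ) : ℝ := (1 - 2*M/r) * (1 + ℓ/r^2)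

/-- `r_max^Sch(ℓ)`, the location of the maximum of the effective potential. -/
noncomputable def rmaxSch (M ℓ : ℝ) : ℝ := ℓ/(2*M) * (1 - Real.sqrt (1 - 12*M^2/ℓ))

/-- `r_min^Sch(ℓ)`, the location of the minimum of the effective potential. -/
noncomputable def rminSch (M ℓ : ℝ) : ℝ := ℓ/(2*M) * (1 + Real.sqrt (1 - 12*M^2/ℓ))

lemma quad (M ℓ σ : ℝ) (hM : M ≠ 0) (h2 : σ^2*ℓ = ℓ - 12*M^2) :
    M*(ℓ/(2*M)*(1+σ))^2 - ℓ*(ℓ/(2*M)*(1+σ)) + 3*M*ℓ = 0 := by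
  field_simp
  linear_combination ℓ * h2

lemma key (M ℓ r : ℝ) (hM : 0 < M) (hr : 0 < r)
    (hq : M*r^2 - ℓ*r + 3*M*ℓ = 0) :
    Esch M ℓ r = 8/9 + (ℓ - 12*M^2)/(9*M*r) := by
  unfold Esch
  field_simp
  ring_nf
  nlinarith [hq, mul_self_nonneg r, sq_nonneg (r - 6*M)]

theorem stmt1 (M ℓ : ℝ) (hM : 0 < M) (hℓ : 12*M^2 < ℓ) :
    Esch M ℓ (rminSch M ℓ) = 8/9 + (ℓ - 12*M^2)/(9*M*rminSch M ℓ) ∧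
    Esch M ℓ (rmaxSch M ℓ) = 8/9 + (ℓ - 12*M^2)/(9*M*rmaxSch M ℓ) := by
  have hℓ0 : 0 < ℓ := lt_trans (by positivity) hℓ
  set s := Real.sqrt (1 - 12*M^2/ℓ) with hs
  have hsnn : 0 ≤ s := Real.sqrt_nonneg _
  have harg : 0 ≤ 1 - 12*M^2/ℓ := by
    rw [sub_nonneg, div_le_one hℓ0]; exact hℓ.le
  have hsq : s^2 = 1 - 12*M^2/ℓ := Real.sq_sqrt harg
  have hs1 : s < 1 := by
    rw [show (1:ℝ) = Real.sqrt 1 by simp]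
    apply Real.sqrt_lt_sqrt harg
    have : 0 < 12*M^2/ℓ := by positivity
    linarith
  have hrmax : 0 < rmaxSch M ℓ := by
    unfold rmaxSch
    apply mul_pos (by positivity)
    linarith
  have hrmin : 0 < rminSch M ℓ := by
    unfold rminSch
    apply mul_pos (by positivity)
    linarith
  have h2 : s^2 * ℓ = ℓ - 12*M^2 := by
    rw [hsq]; field_simp
  have hqmin : M*(rminSch M ℓ)^2 - ℓ*(rminSch M ℓ) + 3*M*ℓ = 0 := by
    unfold rminSch
    exact quad M ℓ s hM.ne' h2
  have hqmax : M*(rmaxSch M ℓ)^2 - ℓ*(rmaxSch M ℓ) + 3*M*ℓ = 0 := by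
    unfold rmaxSch
    rw [← hs]
    have := quad M ℓ (-s) hM.ne' (by rw [neg_pow]; simpa using h2)
    simpa [sub_eq_add_neg] using this
  exact ⟨key M ℓ _ hM hrmin hqmin, key M ℓ _ hM hrmax hqmax⟩
end

section
/- Fix M > 0 and 0 ≤ ℓ ≤ 12M². Then the Schwarzschild effective potential E_ℓ^Sch is strictly increasing on (2M, ∞), tends to 0 as r → 2M⁺, and tends to 1 as r → ∞. Consequently, for every E with 0 < E² < 1 the equation E_ℓ^Sch(r) = E² has exactly one solution in (2M, ∞), and for E² ≥ 1 it has no solution in (2M, ∞). -/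
theorem stmt2 (M ℓ : ℝ) (hM : 0 < M) (hℓ0 : 0 ≤ ℓ) (hℓ : ℓ ≤ 12*M^2) :
    StrictMonoOn (Esch M ℓ) (Set.Ioi (2*M)) ∧
    Filter.Tendsto (Esch M ℓ) (nhdsWithin (2*M) (Set.Ioi (2*M))) (nhds 0) ∧
    Filter.Tendsto (Esch M ℓ) Filter.atTop (nhds 1) ∧
    (∀ E : ℝ, 0 < E^2 → E^2 < 1 → ∃! r, r ∈ Set.Ioi (2*M) ∧ Esch M ℓ r = E^2) ∧
    (∀ E : ℝ, 1 ≤ E^2 → ∀ r ∈ Set.Ioi (2*M), Esch M ℓ r ≠ E^2) := by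
  have hM2 : (0:ℝ) < 2*M := by linarith
  -- strict monotonicity
  have hmono : StrictMonoOn (Esch M ℓ) (Set.Ioi (2*M)) := by
    intro x hx y hy hxy
    simp only [Set.mem_Ioi] at hx hy
    have hx0 : 0 < x := lt_trans hM2 hx
    have hy0 : 0 < y := lt_trans hM2 hy
    have key : Esch M ℓ y - Esch M ℓ x =
        ((y-x) * (2*M*x^2*y^2 + ℓ*(2*M*(x^2+x*y+y^2) - x*y*(x+y)))) / (x^3*y^3) := by
      unfold Esch
      field_simp
      ring
    have hB : 0 < 2*M*x^2*y^2 + ℓ*(2*M*(x^2+x*y+y^2) - x*y*(x+y)) := by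
      rcases eq_or_lt_of_le hℓ with h | h
      · have hne : x - y ≠ 0 := sub_ne_zero.mpr hxy.ne
        have hsq : 0 < (x-y)^2 := by positivity
        rw [h]
        nlinarith [sq_nonneg (x*y - 3*M*(x+y)), mul_pos hM (mul_pos (mul_pos hM hM) hsq),
          mul_nonneg hM.le (sq_nonneg (x*y - 3*M*(x+y)))]
      · nlinarith [mul_pos (sub_pos.mpr h) (mul_pos (mul_pos hx0 hx0) (mul_pos hy0 hy0)),
          mul_nonneg hℓ0 (sq_nonneg (x*y - 3*M*(x+y))),
          mul_nonneg hℓ0 (sq_nonneg (x-y)), sq_nonneg (x-y)]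
    have hpos : 0 < Esch M ℓ y - Esch M ℓ x := by
      rw [key]
      apply div_pos (mul_pos (sub_pos.mpr hxy) hB) (by positivity)
    linarith
  have h2M : (2*M) ≠ 0 := ne_of_gt hM2
  have hcont : ∀ x : ℝ, x ≠ 0 → ContinuousAt (Esch M ℓ) x := by
    intro x hx
    have : ContinuousAt (fun r : ℝ => (1 - 2*M/r) * (1 + ℓ/r^2)) x :=
      (continuousAt_const.sub (continuousAt_const.div continuousAt_id hx)).mul
        (continuousAt_const.add
          (continuousAt_const.div (continuousAt_id.pow 2) (pow_ne_zero 2 hx)))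
    exact this
  have hval : Esch M ℓ (2*M) = 0 := by
    unfold Esch
    rw [div_self h2M]
    ring
  have htend0 : Filter.Tendsto (Esch M ℓ) (nhdsWithin (2*M) (Set.Ioi (2*M))) (nhds 0) := by
    have := (hcont (2*M) h2M).continuousWithinAt (s := Set.Ioi (2*M))
    rwa [ContinuousWithinAt, hval] at this
  have htend1 : Filter.Tendsto (Esch M ℓ) Filter.atTop (nhds 1) := by
    have hA : Filter.Tendsto (fun r : ℝ => 2*M/r) Filter.atTop (nhds 0) :=
      Filter.Tendsto.div_atTop tendsto_const_nhds Filter.tendsto_id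
    have hB2 : Filter.Tendsto (fun r : ℝ => ℓ/r^2) Filter.atTop (nhds 0) :=
      Filter.Tendsto.div_atTop tendsto_const_nhds (Filter.tendsto_pow_atTop two_ne_zero)
    have h1 : Filter.Tendsto (fun r : ℝ => (1 - 2*M/r) * (1 + ℓ/r^2))
        Filter.atTop (nhds ((1-0)*(1+0))) :=
      (tendsto_const_nhds.sub hA).mul (tendsto_const_nhds.add hB2)
    simp only [sub_zero, add_zero, mul_one] at h1
    exact h1
  have hlt1 : ∀ r ∈ Set.Ioi (2*M), Esch M ℓ r < 1 := by
    intro r hr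
    simp only [Set.mem_Ioi] at hr
    have hr0 : 0 < r := lt_trans hM2 hr
    have key : Esch M ℓ r - 1 = (ℓ*(r - 2*M) - 2*M*r^2)/r^3 := by
      unfold Esch
      field_simp
      ring
    have hnum : ℓ*(r - 2*M) - 2*M*r^2 < 0 := by
      nlinarith [mul_nonneg hM.le (sq_nonneg (r - 3*M)),
        mul_nonneg (sub_nonneg.mpr hℓ) (by linarith : (0:ℝ) ≤ r - 2*M),
        mul_pos hM (mul_pos hM hM)]
    have : Esch M ℓ r - 1 < 0 := by
      rw [key]
      exact div_neg_of_neg_of_pos hnum (by positivity)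
    linarith
  refine ⟨hmono, htend0, htend1, ?_, ?_⟩
  · intro E hE0 hE1
    obtain ⟨a, haE, ha⟩ :=
      ((htend0.eventually (gt_mem_nhds hE0)).and self_mem_nhdsWithin).exists
    obtain ⟨b, hbE, hab⟩ :=
      ((htend1.eventually (lt_mem_nhds hE1)).and (Filter.eventually_gt_atTop a)).exists
    have hconts : ContinuousOn (Esch M ℓ) (Set.Icc a b) := by
      intro x hx
      have hx2 : 2*M < x := lt_of_lt_of_le ha hx.1
      exact (hcont x (by linarith)).continuousWithinAt
    have hmem : E^2 ∈ Set.Icc (Esch M ℓ a) (Esch M ℓ b) := ⟨le_of_lt haE, le_of_lt hbE⟩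
    obtain ⟨r, hr, hre⟩ := intermediate_value_Icc (le_of_lt hab) hconts hmem
    have hrI : r ∈ Set.Ioi (2*M) := Set.mem_Ioi.mpr (lt_of_lt_of_le ha hr.1)
    refine ⟨r, ⟨hrI, hre⟩, ?_⟩
    rintro s ⟨hs, hse⟩
    exact hmono.injOn hs hrI (by rw [hse, hre])
  · intro E hE r hr
    exact ne_of_lt (lt_of_lt_of_le (hlt1 r hr) hE)
end

section
/- Fix M > 0 and set ℓ = 12M². Then r = 6M is the unique solution in (2M, ∞) of the equation E_ℓ^Sch(r) = 8/9, and it is a triple root: E_ℓ^Sch(6M) = 8/9, (E_ℓ^Sch)'(6M) = 0, and (E_ℓ^Sch)''(6M) = 0. -/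
lemma esch_hasDerivAt (M ℓ r : ℝ) (hr : r ≠ 0) :
    HasDerivAt (Esch M ℓ) (2*M/r^2 - 2*ℓ/r^3 + 6*M*ℓ/r^4) r := by
  have h1 : HasDerivAt (fun x : ℝ => 1 - 2*M/x)
      (-((0 * r - 2*M*1) / r^2)) r :=
    (((hasDerivAt_const r (2*M)).div (hasDerivAt_id r) hr)).const_sub 1
  have h2 : HasDerivAt (fun x : ℝ => 1 + ℓ/x^2)
      ((0 * r^2 - ℓ * (↑2 * r^(2-1))) / (r^2)^2) r :=
    ((hasDerivAt_const r ℓ).div (hasDerivAt_pow 2 r) (pow_ne_zero 2 hr)).const_add 1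
  have h := h1.mul h2
  convert h using 1
  · rfl
  · rfl
  · rfl
  field_simp
  ring

lemma eschDeriv_hasDerivAt (M ℓ r : ℝ) (hr : r ≠ 0) :
    HasDerivAt (fun x : ℝ => 2*M/x^2 - 2*ℓ/x^3 + 6*M*ℓ/x^4)
      (-4*M/r^3 + 6*ℓ/r^4 - 24*M*ℓ/r^5) r := by
  have h1 := (hasDerivAt_const r (2*M)).div (hasDerivAt_pow 2 r) (pow_ne_zero 2 hr)
  have h2 := (hasDerivAt_const r (2*ℓ)).div (hasDerivAt_pow 3 r) (pow_ne_zero 3 hr)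
  have h3 := (hasDerivAt_const r (6*M*ℓ)).div (hasDerivAt_pow 4 r) (pow_ne_zero 4 hr)
  have h := (h1.sub h2).add h3
  convert h using 1
  · rfl
  · rfl
  · rfl
  field_simp
  ring

theorem stmt3 (M : ℝ) (hM : 0 < M) :
    (∀ r ∈ Set.Ioi (2*M), (Esch M (12*M^2) r = 8/9 ↔ r = 6*M)) ∧
    Esch M (12*M^2) (6*M) = 8/9 ∧
    deriv (Esch M (12*M^2)) (6*M) = 0 ∧
    deriv (deriv (Esch M (12*M^2))) (6*M) = 0 := by
  have h6 : (6:ℝ)*M ≠ 0 := by positivity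
  have hval : Esch M (12*M^2) (6*M) = 8/9 := by
    unfold Esch; field_simp; ring
  refine ⟨?_, hval, ?_, ?_⟩
  · intro r hr
    have hr0 : (0:ℝ) < r := lt_trans (by positivity) hr
    constructor
    · intro h
      unfold Esch at h
      field_simp at h
      have hcube : (r - 6*M)^3 = 0 := by linear_combination h
      have := pow_eq_zero_iff (n := 3) (by norm_num) |>.mp hcube
      linarith
    · intro h; rw [h]; exact hval
  · rw [(esch_hasDerivAt M (12*M^2) (6*M) h6).deriv]
    field_simp; ring
  · have hev : deriv (Esch M (12*M^2)) =ᶠ[nhds (6*M)]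
        (fun x : ℝ => 2*M/x^2 - 2*(12*M^2)/x^3 + 6*M*(12*M^2)/x^4) := by
      filter_upwards [eventually_ne_nhds h6] with x hx
      exact (esch_hasDerivAt M (12*M^2) x hx).deriv
    rw [hev.deriv_eq, (eschDeriv_hasDerivAt M (12*M^2) (6*M) h6).deriv]
    field_simp; ring
end

section
/- Fix M > 0 and E with √(8/9) < E < 1. Then ℓ_lb(E) > 12M² and ℓ_ub(E) > 12M², and they solve the critical-value equations: E_{ℓ_ub(E)}^Sch(r_min^Sch(ℓ_ub(E))) = E² (i.e. E^min(ℓ_ub(E)) = E²) and E_{ℓ_lb(E)}^Sch(r_max^Sch(ℓ_lb(E))) = E² (i.e. E^max(ℓ_lb(E)) = E²). -/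
/-- `ℓ_lb(E) = 12M²/(1 - 4α - 8α² + 8α√(α² + α))` with `α = (9/8)E² - 1`. -/
noncomputable def llb (M E : ℝ) : ℝ :=
  12*M^2 / (1 - 4*(9/8*E^2-1) - 8*(9/8*E^2-1)^2
    + 8*(9/8*E^2-1)*Real.sqrt ((9/8*E^2-1)^2 + (9/8*E^2-1)))

/-- `ℓ_ub(E) = 12M²/(1 - 4α - 8α² - 8α√(α² + α))` with `α = (9/8)E² - 1`. -/
noncomputable def lub (M E : ℝ) : ℝ :=
  12*M^2 / (1 - 4*(9/8*E^2-1) - 8*(9/8*E^2-1)^2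
    - 8*(9/8*E^2-1)*Real.sqrt ((9/8*E^2-1)^2 + (9/8*E^2-1)))

set_option maxHeartbeats 1000000 in
theorem stmt7 (M E : ℝ) (hM : 0 < M) (h1 : Real.sqrt (8/9) < E) (h2 : E < 1) :
    12*M^2 < llb M E ∧ 12*M^2 < lub M E ∧
    Esch M (lub M E) (rminSch M (lub M E)) = E^2 ∧
    Esch M (llb M E) (rmaxSch M (llb M E)) = E^2 := by
  have hE0 : 0 < E := lt_trans (Real.sqrt_pos.mpr (by norm_num)) h1
  have h89 : (Real.sqrt (8/9))^2 = (8/9 : ℝ) := Real.sq_sqrt (by norm_num)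
  have hE2 : 8/9 < E^2 := by nlinarith [Real.sqrt_nonneg (8/9 : ℝ)]
  have hE21 : E^2 < 1 := by nlinarith
  simp only [llb, lub, Esch, rminSch, rmaxSch]
  set α := 9/8*E^2 - 1 with hα
  have hα0 : 0 < α := by simp only [hα]; linarith
  have hα1 : α < 1/8 := by simp only [hα]; linarith
  set a := Real.sqrt α with ha'
  set b := Real.sqrt (1+α) with hb'
  have ha : 0 < a := Real.sqrt_pos.mpr hα0
  have hb : 0 < b := Real.sqrt_pos.mpr (by linarith)
  have ha2 : a^2 = α := Real.sq_sqrt hα0.le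
  have hb2a : b^2 = 1 + a^2 := by rw [ha2]; exact Real.sq_sqrt (by linarith)
  have hE2b : E^2 = 8/9*b^2 := by
    have := hb2a; rw [ha2] at this; simp only [hα] at this; linarith
  have hs : Real.sqrt (α^2+α) = a*b := by
    rw [show α^2+α = α*(1+α) by ring, Real.sqrt_mul hα0.le, ← ha', ← hb']
  rw [hs]
  have hba : a < b := by nlinarith
  have ha8 : 8*a^2 < 1 := by rw [ha2]; linarith
  have key1 : 2*a*(a+b) < 1 := by nlinarith [mul_pos ha hb]
  have key2 : 2*a*(b-a) < 1 := by nlinarith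
  set v := 2*a*(a+b) with hv'
  set u := 2*a*(b-a) with hu'
  have hv0 : 0 < v := by positivity
  have hu0 : 0 < u := by simp only [hu']; nlinarith
  set Du := 1 - 4*α - 8*α^2 + 8*α*(a*b) with hDu'
  set Dv := 1 - 4*α - 8*α^2 - 8*α*(a*b) with hDv'
  have hDvF : Dv = (1-v)*(1+v) := by
    simp only [hDv', hv', ← ha2]; linear_combination (4*a^2) * hb2a
  have hDuF : Du = (1-u)*(1+u) := by
    simp only [hDu', hu', ← ha2]; linear_combination (4*a^2) * hb2a
  clear_value Dv Du u v b a α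
  have hDv0 : 0 < Dv := by
    rw [hDvF]; exact mul_pos (by linarith) (by linarith)
  have hDu0 : 0 < Du := by
    rw [hDuF]; exact mul_pos (by linarith) (by linarith)
  have hDv1 : Dv < 1 := by rw [hDvF]; nlinarith
  have hDu1 : Du < 1 := by rw [hDuF]; nlinarith
  have hM2 : (0:ℝ) < 12*M^2 := by positivity
  have hMne : M ≠ 0 := hM.ne'
  refine ⟨?_, ?_, ?_, ?_⟩
  · rw [lt_div_iff₀ hDu0]
    have h := mul_lt_mul_of_pos_left hDu1 hM2
    linarith
  · rw [lt_div_iff₀ hDv0]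
    have h := mul_lt_mul_of_pos_left hDv1 hM2
    linarith
  · -- Esch at rmin of lub
    have h12 : 12*M^2/(12*M^2/Dv) = Dv := by
      field_simp
    rw [h12]
    have hsq : Real.sqrt (1 - Dv) = v := by
      rw [show 1 - Dv = v^2 by rw [hDvF]; ring]
      exact Real.sqrt_sq hv0.le
    rw [hsq]
    have h1v : 0 < 1 - v := by linarith
    have h2v : 0 < 1 + v := by linarith
    have hr : 12*M^2/Dv/(2*M)*(1+v) = 6*M/(1-v) := by
      rw [hDvF]; field_simp; ring
    rw [hr]
    have main : (1 - 2*M/(6*M/(1-v))) * (1 + (12*M^2/Dv)/(6*M/(1-v))^2)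
        = 2*(2+v)^2/(9*(1+v)) := by
      rw [hDvF]; field_simp; ring
    rw [main, hE2b]
    have e1 : 1 + v = (a+b)^2 := by simp only [hv']; linear_combination -hb2a
    have e2 : 2 + v = 2*b*(a+b) := by simp only [hv']; linear_combination (-2)*hb2a
    rw [e1, e2]
    have hab : a + b ≠ 0 := by positivity
    field_simp; ring
  · -- Esch at rmax of llb
    have h12 : 12*M^2/(12*M^2/Du) = Du := by
      field_simp
    rw [h12]
    have hsq : Real.sqrt (1 - Du) = u := by
      rw [show 1 - Du = u^2 by rw [hDuF]; ring]
      exact Real.sqrt_sq hu0.le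
    rw [hsq]
    have h1u : 0 < 1 - u := by linarith
    have h2u : 0 < 1 + u := by linarith
    have hr : 12*M^2/Du/(2*M)*(1-u) = 6*M/(1+u) := by
      rw [hDuF]; field_simp; ring
    rw [hr]
    have main : (1 - 2*M/(6*M/(1+u))) * (1 + (12*M^2/Du)/(6*M/(1+u))^2)
        = 2*(2-u)^2/(9*(1-u)) := by
      rw [hDuF]; field_simp; ring
    rw [main, hE2b]
    have e1 : 1 - u = (b-a)^2 := by simp only [hu']; linear_combination -hb2a
    have e2 : 2 - u = 2*b*(b-a) := by simp only [hu']; linear_combination (-2)*hb2a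
    rw [e1, e2]
    have hab : b - a ≠ 0 := sub_ne_zero.mpr hba.ne'
    field_simp; ring
end

section
/- Fix M > 0, ℓ > 12M², and E > 0 with E² < 1 and E^min(ℓ) < E² < E^max(ℓ). Then the equation E_ℓ^Sch(r) = E² has exactly three solutions r₀ < r₁ < r₂ in (2M, ∞); they satisfy 2M < r₀ < r_max^Sch(ℓ) < r₁ < r_min^Sch(ℓ) < r₂, and each is a simple root, i.e. (E_ℓ^Sch)'(rᵢ) ≠ 0 for i = 0, 1, 2. -/
lemma quad_fact (M ℓ : ℝ) (hM : 0 < M) (hℓ : 12*M^2 < ℓ) (r : ℝ) :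
    M*r^2 - ℓ*r + 3*M*ℓ = M*(r - rmaxSch M ℓ)*(r - rminSch M ℓ) := by
  have hl0 : 0 < ℓ := lt_trans (by positivity) hℓ
  set s := Real.sqrt (1 - 12*M^2/ℓ) with hsdef
  have hs : s^2 = 1 - 12*M^2/ℓ := Real.sq_sqrt (by
    rw [sub_nonneg, div_le_one hl0]; linarith)
  unfold rmaxSch rminSch
  rw [← hsdef]
  have hM' : M ≠ 0 := ne_of_gt hM
  have hl' : ℓ ≠ 0 := ne_of_gt hl0
  field_simp at hs ⊢
  linear_combination ℓ * hs

lemma hasDerivAt_Esch (M ℓ r : ℝ) (hr : r ≠ 0) :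
    HasDerivAt (Esch M ℓ) ((2*M*r^2 - 2*ℓ*r + 6*M*ℓ)/r^4) r := by
  have h1 : HasDerivAt (fun r : ℝ => 1 - 2*M/r) (2*M/r^2) r := by
    simp only [div_eq_mul_inv]
    have := ((hasDerivAt_inv hr).const_mul (2*M)).const_sub 1
    refine this.congr_deriv ?_
    field_simp
  have h2 : HasDerivAt (fun r : ℝ => 1 + ℓ/r^2) (-2*ℓ/r^3) r := by
    simp only [div_eq_mul_inv]
    have hp : HasDerivAt (fun r : ℝ => r^2) (2*r) r := by
      simpa using hasDerivAt_pow 2 r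
    have := (((hp.inv (pow_ne_zero 2 hr)).const_mul ℓ).const_add 1)
    refine this.congr_deriv ?_
    field_simp
  have hval : (2*M*r^2 - 2*ℓ*r + 6*M*ℓ)/r^4
      = (2*M/r^2)*(1+ℓ/r^2) + (1-2*M/r)*(-2*ℓ/r^3) := by
    field_simp; ring
  rw [hval]
  exact h1.mul h2

lemma deriv_Esch (M ℓ r : ℝ) (hM : 0 < M) (hℓ : 12*M^2 < ℓ) (hr : r ≠ 0) :
    deriv (Esch M ℓ) r = 2*M*(r - rmaxSch M ℓ)*(r - rminSch M ℓ)/r^4 := by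
  rw [(hasDerivAt_Esch M ℓ r hr).deriv,
    show 2*M*r^2 - 2*ℓ*r + 6*M*ℓ = 2*(M*r^2 - ℓ*r + 3*M*ℓ) by ring,
    quad_fact M ℓ hM hℓ r]
  ring

lemma order_facts (M ℓ : ℝ) (hM : 0 < M) (hℓ : 12*M^2 < ℓ) :
    2*M < rmaxSch M ℓ ∧ rmaxSch M ℓ < rminSch M ℓ := by
  have hl0 : 0 < ℓ := lt_trans (by positivity) hℓ
  set s := Real.sqrt (1 - 12*M^2/ℓ) with hsdef
  have harg : 0 < 1 - 12*M^2/ℓ := by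
    rw [sub_pos, div_lt_one hl0]; exact hℓ
  have hs0 : 0 < s := Real.sqrt_pos.2 harg
  have hsl : s < 1 - 6*M^2/ℓ := by
    rw [hsdef]
    rw [show (1:ℝ) - 6*M^2/ℓ = (ℓ - 6*M^2)/ℓ by field_simp]
    rw [Real.sqrt_lt' (div_pos (by nlinarith) hl0)]
    rw [div_pow, lt_div_iff₀ (by positivity)]
    have he : (1 - 12*M^2/ℓ)*ℓ^2 = ℓ^2 - 12*M^2*ℓ := by field_simp
    rw [he]
    nlinarith [pow_pos hM 4]
  constructor
  · unfold rmaxSch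
    rw [← hsdef, show ℓ/(2*M)*(1-s) = ℓ*(1-s)/(2*M) by ring,
      lt_div_iff₀ (by positivity)]
    have h6 : 6*M^2/ℓ < 1 - s := by linarith
    have := (div_lt_iff₀ hl0).1 h6
    nlinarith
  · unfold rmaxSch rminSch
    rw [← hsdef]
    have : 0 < ℓ/(2*M) := by positivity
    nlinarith

/-- With `E^min(ℓ) = Esch M ℓ (rminSch M ℓ)` and `E^max(ℓ) = Esch M ℓ (rmaxSch M ℓ)`:
for `E² < 1` strictly between the critical values, there are exactly three simple roots. -/
theorem stmt8 (M ℓ E : ℝ) (hM : 0 < M) (hℓ : 12*M^2 < ℓ) (hE : 0 < E) (hE1 : E^2 < 1)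
    (hmin : Esch M ℓ (rminSch M ℓ) < E^2) (hmax : E^2 < Esch M ℓ (rmaxSch M ℓ)) :
    ∃ r0 r1 r2 : ℝ,
      2*M < r0 ∧ r0 < rmaxSch M ℓ ∧ rmaxSch M ℓ < r1 ∧ r1 < rminSch M ℓ ∧ rminSch M ℓ < r2 ∧
      Esch M ℓ r0 = E^2 ∧ Esch M ℓ r1 = E^2 ∧ Esch M ℓ r2 = E^2 ∧
      deriv (Esch M ℓ) r0 ≠ 0 ∧ deriv (Esch M ℓ) r1 ≠ 0 ∧ deriv (Esch M ℓ) r2 ≠ 0 ∧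
      ∀ r ∈ Set.Ioi (2*M), Esch M ℓ r = E^2 → r = r0 ∨ r = r1 ∨ r = r2 := by
  have hl0 : 0 < ℓ := lt_trans (by positivity) hℓ
  obtain ⟨h2a, hab⟩ := order_facts M ℓ hM hℓ
  set a := rmaxSch M ℓ
  set b := rminSch M ℓ
  have h2M : (0:ℝ) < 2*M := by positivity
  have ha0 : 0 < a := lt_trans h2M h2a
  have hb0 : 0 < b := lt_trans ha0 hab
  -- continuity on positive reals
  have cont : ∀ u v : ℝ, 0 < u → ContinuousOn (Esch M ℓ) (Set.Icc u v) := by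
    intro u v hu x hx
    exact ((hasDerivAt_Esch M ℓ x (ne_of_gt (lt_of_lt_of_le hu hx.1))).continuousAt).continuousWithinAt
  -- monotonicity
  have mono1 : StrictMonoOn (Esch M ℓ) (Set.Icc (2*M) a) := by
    apply strictMonoOn_of_deriv_pos (convex_Icc _ _) (cont _ _ h2M)
    intro x hx
    rw [interior_Icc] at hx
    have hx0 : 0 < x := lt_trans h2M hx.1
    rw [deriv_Esch M ℓ x hM hℓ (ne_of_gt hx0)]
    apply div_pos _ (by positivity)
    have h1 : 0 < a - x := by linarith [hx.2]
    have h2 : 0 < b - x := by linarith [hx.2]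
    nlinarith [mul_pos h1 h2]
  have anti : StrictAntiOn (Esch M ℓ) (Set.Icc a b) := by
    apply strictAntiOn_of_deriv_neg (convex_Icc _ _) (cont _ _ ha0)
    intro x hx
    rw [interior_Icc] at hx
    have hx0 : 0 < x := lt_trans ha0 hx.1
    rw [deriv_Esch M ℓ x hM hℓ (ne_of_gt hx0)]
    apply div_neg_of_neg_of_pos _ (by positivity)
    have h1 : 0 < x - a := by linarith [hx.1]
    have h2 : 0 < b - x := by linarith [hx.2]
    nlinarith [mul_pos h1 h2]
  have mono2 : StrictMonoOn (Esch M ℓ) (Set.Ici b) := by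
    apply strictMonoOn_of_deriv_pos (convex_Ici _) (fun x hx =>
      ((hasDerivAt_Esch M ℓ x (ne_of_gt (lt_of_lt_of_le hb0 hx))).continuousAt).continuousWithinAt)
    intro x hx
    rw [interior_Ici] at hx
    have hx0 : 0 < x := lt_trans hb0 hx
    rw [deriv_Esch M ℓ x hM hℓ (ne_of_gt hx0)]
    apply div_pos _ (by positivity)
    have hx' : b < x := hx
    have h1 : 0 < x - a := by linarith
    have h2 : 0 < x - b := by linarith
    nlinarith [mul_pos h1 h2]
  -- value at 2M
  have hE2M : Esch M ℓ (2*M) = 0 := by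
    unfold Esch
    rw [div_self (ne_of_gt h2M)]
    ring
  have hE2pos : 0 < E^2 := by positivity
  -- r0
  obtain ⟨r0, hr0mem, hr0⟩ : ∃ r0 ∈ Set.Ioo (2*M) a, Esch M ℓ r0 = E^2 := by
    have := intermediate_value_Ioo (le_of_lt h2a) (cont _ _ h2M)
    have hmem : E^2 ∈ Set.Ioo (Esch M ℓ (2*M)) (Esch M ℓ a) := by
      rw [hE2M]; exact ⟨hE2pos, hmax⟩
    obtain ⟨r0, h1, h2⟩ := this hmem
    exact ⟨r0, h1, h2⟩
  -- r1
  obtain ⟨r1, hr1mem, hr1⟩ : ∃ r1 ∈ Set.Ioo a b, Esch M ℓ r1 = E^2 := by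
    have := intermediate_value_Ioo' (le_of_lt hab) (cont _ _ ha0)
    have hmem : E^2 ∈ Set.Ioo (Esch M ℓ b) (Esch M ℓ a) := ⟨hmin, hmax⟩
    obtain ⟨r1, h1, h2⟩ := this hmem
    exact ⟨r1, h1, h2⟩
  -- point with large value
  set R : ℝ := max (b+1) (2*M/(1-E^2)+1) with hRdef
  have h1E : 0 < 1 - E^2 := by linarith
  have hbR : b < R := lt_of_lt_of_le (by linarith) (le_max_left _ _)
  have hRpos : 0 < R := lt_trans hb0 hbR
  have h2MR : 2*M < R := by linarith [lt_trans h2a hab]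
  have hER : E^2 < Esch M ℓ R := by
    have hc : 2*M/(1-E^2)*(1-E^2) = 2*M := by field_simp
    have hR2 : 2*M/(1-E^2)+1 ≤ R := le_max_right _ _
    have hfrac : 2*M/R < 1 - E^2 := by
      rw [div_lt_iff₀ hRpos]
      nlinarith
    have hfirst : 0 < 1 - 2*M/R := by
      rw [sub_pos, div_lt_one hRpos]; exact h2MR
    have hsecond : 1 ≤ 1 + ℓ/R^2 := by
      have : 0 ≤ ℓ/R^2 := by positivity
      linarith
    calc E^2 < 1 - 2*M/R := by linarith
    _ ≤ (1 - 2*M/R) * (1 + ℓ/R^2) := le_mul_of_one_le_right (le_of_lt hfirst) hsecond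
    _ = Esch M ℓ R := rfl
  -- r2
  obtain ⟨r2, hr2mem, hr2⟩ : ∃ r2 ∈ Set.Ioo b R, Esch M ℓ r2 = E^2 := by
    have := intermediate_value_Ioo (le_of_lt hbR) (cont _ _ hb0)
    obtain ⟨r2, h1, h2⟩ := this ⟨hmin, hER⟩
    exact ⟨r2, h1, h2⟩
  have hr00 : 0 < r0 := lt_trans h2M hr0mem.1
  have hr10 : 0 < r1 := lt_trans ha0 hr1mem.1
  have hr20 : 0 < r2 := lt_trans hb0 hr2mem.1
  refine ⟨r0, r1, r2, hr0mem.1, hr0mem.2, hr1mem.1, hr1mem.2, hr2mem.1, hr0, hr1, hr2, ?_, ?_, ?_, ?_⟩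
  · rw [deriv_Esch M ℓ r0 hM hℓ (ne_of_gt hr00)]
    apply ne_of_gt
    apply div_pos _ (by positivity)
    have h1 : 0 < a - r0 := by linarith [hr0mem.2]
    have h2 : 0 < b - r0 := by linarith [hr0mem.2, hab]
    nlinarith [mul_pos h1 h2]
  · rw [deriv_Esch M ℓ r1 hM hℓ (ne_of_gt hr10)]
    apply ne_of_lt
    apply div_neg_of_neg_of_pos _ (by positivity)
    have h1 : 0 < r1 - a := by linarith [hr1mem.1]
    have h2 : 0 < b - r1 := by linarith [hr1mem.2]
    nlinarith [mul_pos h1 h2]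
  · rw [deriv_Esch M ℓ r2 hM hℓ (ne_of_gt hr20)]
    apply ne_of_gt
    apply div_pos _ (by positivity)
    have h1 : 0 < r2 - a := by linarith [hr2mem.1]
    have h2 : 0 < r2 - b := by linarith [hr2mem.1]
    nlinarith [mul_pos h1 h2]
  · intro r hr hre
    simp only [Set.mem_Ioi] at hr
    rcases lt_trichotomy r a with h | h | h
    · left
      exact mono1.injOn ⟨le_of_lt hr, le_of_lt h⟩
        ⟨le_of_lt hr0mem.1, le_of_lt hr0mem.2⟩ (hre.trans hr0.symm)
    · exfalso; rw [h] at hre; linarith [hmax, hre.ge]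
    · rcases lt_trichotomy r b with h' | h' | h'
      · right; left
        exact anti.injOn ⟨le_of_lt h, le_of_lt h'⟩
          ⟨le_of_lt hr1mem.1, le_of_lt hr1mem.2⟩ (hre.trans hr1.symm)
      · exfalso; rw [h'] at hre; linarith [hmin, hre.le]
      · right; right
        exact mono2.injOn (le_of_lt h') (le_of_lt hr2mem.1) (hre.trans hr2.symm)
end

section
/- Fix M > 0 and E, ℓ with E² ≥ 1, and assume either 0 ≤ ℓ ≤ 12M², or ℓ > 12M² and E² > E^max(ℓ). Then E_ℓ^Sch(r) < E² for every r ∈ (2M, ∞); in particular the equation E_ℓ^Sch(r) = E² has no solution in (2M, ∞). -/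
set_option maxHeartbeats 1600000 in
theorem stmt9 (M ℓ E : ℝ) (hM : 0 < M) (hE : 1 ≤ E^2)
    (h : (0 ≤ ℓ ∧ ℓ ≤ 12*M^2) ∨ (12*M^2 < ℓ ∧ Esch M ℓ (rmaxSch M ℓ) < E^2)) :
    (∀ r ∈ Set.Ioi (2*M), Esch M ℓ r < E^2) ∧
    (∀ r ∈ Set.Ioi (2*M), Esch M ℓ r ≠ E^2) := by
  have main : ∀ r ∈ Set.Ioi (2*M), Esch M ℓ r < E^2 := by
    intro r hr
    have hr2 : 2*M < r := hr
    have hr0 : 0 < r := lt_trans (by positivity) hr2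
    have hrne : r ≠ 0 := ne_of_gt hr0
    have hr3 : (0:ℝ) < r^3 := pow_pos hr0 3
    -- reduce to a polynomial inequality
    have h1 : Esch M ℓ r * r^3 = (r - 2*M) * (r^2 + ℓ) := by
      unfold Esch; field_simp
    have hpoly : (r - 2*M) * (r^2 + ℓ) < E^2 * r^3 → Esch M ℓ r < E^2 := by
      intro hX
      have h2 : Esch M ℓ r * r^3 < E^2 * r^3 := by rw [h1]; exact hX
      exact (mul_lt_mul_iff_of_pos_right hr3).mp h2
    apply hpoly
    rcases h with ⟨hℓ0, hℓ12⟩ | ⟨hℓ12, hEf⟩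
    · -- case 0 ≤ ℓ ≤ 12M²
      rcases eq_or_lt_of_le hℓ0 with hz | hpos
      · nlinarith [mul_pos hM (mul_pos hr0 hr0),
          mul_nonneg (sub_nonneg.2 hE) (le_of_lt hr3)]
      · have h16 : ℓ < 16*M^2 := by nlinarith
        nlinarith [sq_nonneg (4*M*r - ℓ), mul_pos hpos (sub_pos.2 h16),
          mul_nonneg (sub_nonneg.2 hE) (le_of_lt hr3)]
    · -- case ℓ > 12M²
      obtain ⟨s, hsdef⟩ : ∃ s : ℝ, s = Real.sqrt (1 - 12*M^2/ℓ) := ⟨_, rfl⟩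
      have hℓ0 : 0 < ℓ := lt_trans (by positivity) hℓ12
      have harg0 : 0 ≤ 1 - 12*M^2/ℓ := by
        rw [sub_nonneg, div_le_one hℓ0]; linarith
      have hs0 : 0 ≤ s := hsdef ▸ Real.sqrt_nonneg _
      have hs2 : s^2 = 1 - 12*M^2/ℓ := hsdef ▸ Real.sq_sqrt harg0
      have hs2' : ℓ * s^2 = ℓ - 12*M^2 := by
        rw [hs2]; field_simp
      have hs1 : s < 1 := by
        nlinarith [div_pos (by positivity : (0:ℝ) < 12*M^2) hℓ0]
      obtain ⟨a, haeq⟩ : ∃ a : ℝ, a = ℓ/(2*M) * (1 - s) := ⟨_, rfl⟩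
      have hEfa : Esch M ℓ a < E^2 := by
        rw [haeq, hsdef]; exact hEf
      have h2a : 2*M*a = ℓ*(1 - s) := by
        rw [haeq]; field_simp
      have ha0 : 0 < a := by
        rw [haeq]
        apply mul_pos (by positivity)
        linarith
      have hane : a ≠ 0 := ne_of_gt ha0
      have ha3c : (0:ℝ) < a^3 := pow_pos ha0 3
      -- critical point equation
      have hq4 : (4*M) * (M*a^2 - ℓ*a + 3*M*ℓ) = 0 := by
        linear_combination (2*M*a - ℓ*(1+s)) * h2a + ℓ * hs2'
      have hq : M*a^2 - ℓ*a + 3*M*ℓ = 0 :=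
        (mul_eq_zero.mp hq4).resolve_left (by positivity)
      have ha3 : 3*M < a := by
        by_contra hc
        push_neg at hc
        nlinarith [mul_nonneg (le_of_lt hℓ0) (sub_nonneg.2 hc),
          mul_pos hM (mul_pos ha0 ha0)]
      have ha6 : a ≤ 6*M := by
        nlinarith [mul_nonneg (mul_nonneg (le_of_lt hℓ0) hs0)
          (sub_nonneg.2 (le_of_lt hs1)), h2a, hs2']
      -- E² a³ > (a-2M)(a²+ℓ)
      have hFa : (a - 2*M) * (a^2 + ℓ) < E^2 * a^3 := by
        have hE1 : Esch M ℓ a * a^3 = (a - 2*M) * (a^2 + ℓ) := by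
          unfold Esch; field_simp
        calc (a - 2*M) * (a^2 + ℓ) = Esch M ℓ a * a^3 := hE1.symm
          _ < E^2 * a^3 := mul_lt_mul_of_pos_right hEfa ha3c
      rcases le_or_gt a (4*M) with ha4 | ha4
      · -- f(a) ≥ 1 regime: use key identity
        have key : a^3*(E^2*r^3 - (r - 2*M)*(r^2 + ℓ)) =
            (E^2*a^3 - (a - 2*M)*(a^2 + ℓ))*r^3
            + (r - a)^2*(ℓ*(4*M - a)*r + 2*M*ℓ*a) := by
          linear_combination (2*r^2*(a - r)) * hq
        have hb1 : 0 < (E^2*a^3 - (a - 2*M)*(a^2 + ℓ))*r^3 :=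
          mul_pos (by linarith) hr3
        have hb2 : 0 ≤ (r - a)^2*(ℓ*(4*M - a)*r + 2*M*ℓ*a) := by
          apply mul_nonneg (sq_nonneg _)
          have hbb : 0 ≤ ℓ*(4*M - a)*r :=
            mul_nonneg (mul_nonneg (le_of_lt hℓ0) (by linarith)) (le_of_lt hr0)
          nlinarith [mul_pos (mul_pos hM hℓ0) ha0]
        have h4 : 0 < a^3*(E^2*r^3 - (r - 2*M)*(r^2 + ℓ)) := by
          rw [key]; linarith
        have h5 : 0 < E^2*r^3 - (r - 2*M)*(r^2 + ℓ) :=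
          (mul_pos_iff_of_pos_left ha3c).mp h4
        linarith
      · -- f(a) < 1 regime: ℓ < 16M²
        have h16 : ℓ < 16*M^2 := by
          nlinarith [mul_pos hM (mul_pos (sub_pos.2 ha4)
            (show (0:ℝ) < 12*M - a by linarith)), hq,
            mul_pos hℓ0 (sub_pos.2 ha3)]
        nlinarith [sq_nonneg (4*M*r - ℓ), mul_pos hℓ0 (sub_pos.2 h16),
          mul_nonneg (sub_nonneg.2 hE) (le_of_lt hr3)]
  exact ⟨main, fun r hr => ne_of_lt (main r hr)⟩
end

section
/- Fix M > 0, ℓ > 12M², and E with E² < 1 and E² > E^max(ℓ). Then the equation E_ℓ^Sch(r) = E² has exactly one solution in (2M, ∞), and this solution lies in (r_min^Sch(ℓ), ∞). -/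
set_option maxHeartbeats 1000000


lemma Esch_deriv (M ℓ r : ℝ) (hr : r ≠ 0) :
    HasDerivAt (Esch M ℓ) (2*(M*r^2 - ℓ*r + 3*M*ℓ)/r^4) r := by
  have h1 : HasDerivAt (fun r : ℝ => 1 - 2*M*r⁻¹) (0 - 2*M*(-(r^2)⁻¹)) r :=
    (hasDerivAt_const r 1).sub ((hasDerivAt_inv hr).const_mul (2*M))
  have h2 : HasDerivAt (fun r : ℝ => 1 + ℓ*(r^2)⁻¹)
      (0 + ℓ*(-(2*r^(2-1))/(r^2)^2)) r :=
    (hasDerivAt_const r 1).add (((hasDerivAt_pow 2 r).inv (pow_ne_zero 2 hr)).const_mul ℓ)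
  have h := h1.mul h2
  have he : Esch M ℓ = fun r : ℝ => (1 - 2*M*r⁻¹) * (1 + ℓ*(r^2)⁻¹) := by
    funext x; simp [Esch, div_eq_mul_inv]
  rw [he]
  convert h using 1
  · rfl
  · rfl
  · rfl
  field_simp
  ring

theorem stmt11 (M ℓ E : ℝ) (hM : 0 < M) (hℓ : 12*M^2 < ℓ) (hE1 : E^2 < 1)
    (hEmax : Esch M ℓ (rmaxSch M ℓ) < E^2) :
    ∃ r : ℝ, rminSch M ℓ < r ∧ Esch M ℓ r = E^2 ∧
      ∀ r' ∈ Set.Ioi (2*M), Esch M ℓ r' = E^2 → r' = r := by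
  have hℓ0 : 0 < ℓ := lt_trans (by positivity) hℓ
  set s : ℝ := Real.sqrt (1 - 12*M^2/ℓ) with hs_def
  have harg : 0 < 1 - 12*M^2/ℓ := by
    rw [sub_pos, div_lt_one hℓ0]; exact hℓ
  have hs0 : 0 < s := Real.sqrt_pos.mpr harg
  have hs2 : s^2 = 1 - 12*M^2/ℓ := Real.sq_sqrt harg.le
  have h12 : 0 < 12*M^2/ℓ := by positivity
  have hs1 : s < 1 := by nlinarith [hs0, hs2, h12]
  have hs2' : ℓ * s^2 = ℓ - 12*M^2 := by rw [hs2]; field_simp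
  set a : ℝ := rmaxSch M ℓ with ha_def
  set b : ℝ := rminSch M ℓ with hb_def
  have ha : a = ℓ/(2*M) * (1 - s) := rfl
  have hb : b = ℓ/(2*M) * (1 + s) := rfl
  have hab : a < b := by
    rw [ha, hb]
    have : 0 < ℓ/(2*M) := by positivity
    nlinarith
  -- a > 3M
  have ha3 : 3*M < a := by
    have key : a * (1 + s) = 6*M := by
      rw [ha]; field_simp; linear_combination -hs2'
    nlinarith
  have ha2 : 2*M < a := by linarith
  have hb2 : 2*M < b := lt_trans ha2 hab
  -- quadratic factorization
  have hsum : a + b = ℓ/M := by rw [ha, hb]; field_simp; ring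
  have hprod : a * b = 3*ℓ := by
    rw [ha, hb]; field_simp; linear_combination -hs2'
  have hq : ∀ r : ℝ, M*r^2 - ℓ*r + 3*M*ℓ = M*(r-a)*(r-b) := by
    intro r
    have h1 : M * (a+b) = ℓ := by rw [hsum]; field_simp
    have h2 : M * (a*b) = 3*M*ℓ := by rw [hprod]; ring
    linear_combination r*h1 - h2
  -- derivative sign and monotonicity
  have hderiv' : ∀ r : ℝ, r ≠ 0 → deriv (Esch M ℓ) r = 2*(M*r^2 - ℓ*r + 3*M*ℓ)/r^4 :=
    fun r hr => (Esch_deriv M ℓ r hr).deriv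
  have hcont : ∀ x : ℝ, x ≠ 0 → ContinuousAt (Esch M ℓ) x :=
    fun x hx => (Esch_deriv M ℓ x hx).continuousAt
  have hmono1 : StrictMonoOn (Esch M ℓ) (Set.Icc (2*M) a) := by
    apply strictMonoOn_of_deriv_pos (convex_Icc _ _)
    · exact fun x hx => (hcont x (by rw [Set.mem_Icc] at hx; nlinarith)).continuousWithinAt
    · intro x hx
      rw [interior_Icc, Set.mem_Ioo] at hx
      have hx0 : (0:ℝ) < x := by nlinarith
      rw [hderiv' x hx0.ne', hq x]
      have : 0 < M*(x-a)*(x-b) := by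
        nlinarith [mul_pos_of_neg_of_neg (show x-a<0 by linarith) (show x-b<0 by linarith [hab])]
      positivity
  have hanti : StrictAntiOn (Esch M ℓ) (Set.Icc a b) := by
    apply strictAntiOn_of_deriv_neg (convex_Icc _ _)
    · exact fun x hx => (hcont x (by rw [Set.mem_Icc] at hx; nlinarith)).continuousWithinAt
    · intro x hx
      rw [interior_Icc, Set.mem_Ioo] at hx
      have hx0 : (0:ℝ) < x := by nlinarith
      rw [hderiv' x hx0.ne', hq x]
      have h1 : M*(x-a)*(x-b) < 0 := by
        nlinarith [mul_pos (show (0:ℝ)<x-a by linarith) (show (0:ℝ)<b-x by linarith)]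
      have h2 : (0:ℝ) < x^4 := by positivity
      exact div_neg_of_neg_of_pos (by nlinarith) h2
  have hmono2 : StrictMonoOn (Esch M ℓ) (Set.Ici b) := by
    apply strictMonoOn_of_deriv_pos (convex_Ici _)
    · exact fun x hx => (hcont x (by rw [Set.mem_Ici] at hx; nlinarith)).continuousWithinAt
    · intro x hx
      rw [interior_Ici, Set.mem_Ioi] at hx
      have hx0 : (0:ℝ) < x := by nlinarith
      rw [hderiv' x hx0.ne', hq x]
      have : 0 < M*(x-a)*(x-b) := by
        nlinarith [mul_pos (show (0:ℝ)<x-a by linarith [hab]) (show (0:ℝ)<x-b by linarith)]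
      positivity
  -- f x < E^2 for x in (2M, b]
  have hsmall : ∀ x : ℝ, 2*M < x → x ≤ b → Esch M ℓ x < E^2 := by
    intro x hx1 hx2
    rcases le_total x a with h | h
    · have := hmono1.monotoneOn (Set.mem_Icc.mpr ⟨hx1.le, h⟩)
        (Set.mem_Icc.mpr ⟨ha2.le, le_refl a⟩) h
      linarith
    · have := hanti.antitoneOn (Set.mem_Icc.mpr ⟨le_refl a, hab.le⟩)
        (Set.mem_Icc.mpr ⟨h, hx2⟩) h
      linarith
  have hfb : Esch M ℓ b < E^2 := hsmall b hb2 le_rfl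
  -- tendsto 1 at top
  have htend : Filter.Tendsto (Esch M ℓ) Filter.atTop (nhds 1) := by
    have h1 : Filter.Tendsto (fun r : ℝ => 1 - 2*M/r) Filter.atTop (nhds 1) := by
      have := tendsto_const_nhds (x := (2*M : ℝ)) (f := Filter.atTop) |>.div_atTop
        Filter.tendsto_id
      simpa using tendsto_const_nhds.sub this
    have h2 : Filter.Tendsto (fun r : ℝ => 1 + ℓ/r^2) Filter.atTop (nhds 1) := by
      have hp : Filter.Tendsto (fun r : ℝ => r^2) Filter.atTop Filter.atTop :=
        Filter.tendsto_pow_atTop (by norm_num)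
      have := tendsto_const_nhds (x := (ℓ : ℝ)) (f := Filter.atTop) |>.div_atTop hp
      simpa using tendsto_const_nhds.add this
    have := h1.mul h2
    rw [mul_one] at this; exact this
  -- find R with b < R and f R > E^2
  obtain ⟨R, hbR, hfR⟩ : ∃ R : ℝ, b < R ∧ E^2 < Esch M ℓ R := by
    have h1 : ∀ᶠ r in Filter.atTop, E^2 < Esch M ℓ r :=
      htend.eventually (eventually_gt_nhds hE1)
    have h2 : ∀ᶠ r in Filter.atTop, b < r := Filter.eventually_gt_atTop b
    obtain ⟨R, hR1, hR2⟩ := (h2.and h1).exists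
    exact ⟨R, hR1, hR2⟩
  -- IVT on [b, R]
  have hcontOn : ContinuousOn (Esch M ℓ) (Set.Icc b R) := by
    exact fun x hx => (hcont x (by rw [Set.mem_Icc] at hx; nlinarith)).continuousWithinAt
  have hmem : E^2 ∈ Set.Ioo (Esch M ℓ b) (Esch M ℓ R) := ⟨hfb, hfR⟩
  obtain ⟨r, hr_mem, hr_eq⟩ := intermediate_value_Ioo hbR.le hcontOn hmem
  refine ⟨r, hr_mem.1, hr_eq, ?_⟩
  intro r' hr' hr'_eq
  rw [Set.mem_Ioi] at hr'
  have hr'b : b < r' := by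
    by_contra h
    push_neg at h
    exact absurd hr'_eq (ne_of_lt (hsmall r' hr' h))
  exact hmono2.injOn (Set.mem_Ici.mpr hr'b.le) (Set.mem_Ici.mpr hr_mem.1.le)
    (by rw [hr'_eq, hr_eq])
end

section
/- Fix M > 0, ℓ > 12M², and E > 0 with E² < 1 and E^min(ℓ) < E² < E^max(ℓ), and let r₀ < r₁ < r₂ be the three solutions in (2M, ∞) of E_ℓ^Sch(r) = E², with r₀ < r_max^Sch(ℓ) < r₁ < r_min^Sch(ℓ) < r₂. If r : ℝ → (2M, ∞) is continuous, satisfies E_ℓ^Sch(r(τ)) ≤ E² for all τ ∈ ℝ, and r(0) ∈ [r₁, r₂], then r(τ) ∈ [r₁, r₂] for all τ ∈ ℝ (the orbit is trapped between the perihelion r₁ and the aphelion r₂). -/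
theorem stmt13 (M ℓ E : ℝ) (hM : 0 < M) (hℓ : 12*M^2 < ℓ) (hE : 0 < E) (hE1 : E^2 < 1)
    (hmin : Esch M ℓ (rminSch M ℓ) < E^2) (hmax : E^2 < Esch M ℓ (rmaxSch M ℓ))
    (r0 r1 r2 : ℝ)
    (h0 : 2*M < r0) (h0m : r0 < rmaxSch M ℓ) (hm1 : rmaxSch M ℓ < r1)
    (h1m : r1 < rminSch M ℓ) (hm2 : rminSch M ℓ < r2)
    (hr0 : Esch M ℓ r0 = E^2) (hr1 : Esch M ℓ r1 = E^2) (hr2 : Esch M ℓ r2 = E^2)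
    (huniq : ∀ s ∈ Set.Ioi (2*M), Esch M ℓ s = E^2 → s = r0 ∨ s = r1 ∨ s = r2)
    (r : ℝ → ℝ) (hrc : Continuous r) (hrdom : ∀ τ : ℝ, r τ ∈ Set.Ioi (2*M))
    (hbound : ∀ τ : ℝ, Esch M ℓ (r τ) ≤ E^2) (hinit : r 0 ∈ Set.Icc r1 r2) :
    ∀ τ : ℝ, r τ ∈ Set.Icc r1 r2 := by
  have h2M : 0 < 2*M := by linarith
  have hℓ0 : 0 < ℓ := by nlinarith
  have hcont : ContinuousOn (Esch M ℓ) (Set.Ioi 0) := by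
    unfold Esch
    apply ContinuousOn.mul
    · exact continuousOn_const.sub
        (continuousOn_const.div continuous_id.continuousOn fun x hx => ne_of_gt hx)
    · exact continuousOn_const.add
        (continuousOn_const.div (continuous_pow 2).continuousOn
          fun x hx => pow_ne_zero 2 (ne_of_gt hx))
  -- Claim A : on (r0, r1) the potential exceeds E^2
  have hA : ∀ s, r0 < s → s < r1 → E^2 < Esch M ℓ s := by
    intro s hs0 hs1
    by_contra hle
    push_neg at hle
    have hsub : Set.uIcc s (rmaxSch M ℓ) ⊆ Set.Ioi 0 := by
      intro t ht
      rcases Set.mem_uIcc.mp ht with h | h <;>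
        · simp only [Set.mem_Ioi]; linarith
    have hmem : E^2 ∈ Set.uIcc (Esch M ℓ s) (Esch M ℓ (rmaxSch M ℓ)) := by
      rw [Set.mem_uIcc]; left; exact ⟨hle, le_of_lt hmax⟩
    obtain ⟨t, ht, hteq⟩ := intermediate_value_uIcc (hcont.mono hsub) hmem
    have htlo : r0 < t := by
      rcases Set.mem_uIcc.mp ht with h | h <;> linarith
    have hthi : t < r1 := by
      rcases Set.mem_uIcc.mp ht with h | h <;> linarith
    rcases huniq t (by simp only [Set.mem_Ioi]; linarith) hteq with h | h | h <;> linarith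
  -- Claim B : beyond r2 the potential exceeds E^2
  have hB : ∀ s, r2 < s → E^2 < Esch M ℓ s := by
    intro s hs
    by_contra hle
    push_neg at hle
    have hspos : 0 < s := by linarith
    obtain ⟨s0, hs0s, hs0big⟩ : ∃ s0, s < s0 ∧ 2*M/(1-E^2) < s0 := by
      refine ⟨max s (2*M/(1-E^2)) + 1, ?_, ?_⟩
      · have := le_max_left s (2*M/(1-E^2)); linarith
      · have := le_max_right s (2*M/(1-E^2)); linarith
    have hs0pos : 0 < s0 := by linarith
    have h1E : (0:ℝ) < 1 - E^2 := by linarith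
    have h2Ms0 : 2*M/s0 < 1 - E^2 := by
      rw [div_lt_iff₀ hs0pos]
      have := (div_lt_iff₀ h1E).mp hs0big
      nlinarith
    have hEs0 : E^2 < Esch M ℓ s0 := by
      have hb : (0:ℝ) ≤ ℓ/s0^2 := by positivity
      unfold Esch
      nlinarith [sq_nonneg E]
    have hsub : Set.Icc s s0 ⊆ Set.Ioi 0 := by
      intro t ht
      simp only [Set.mem_Ioi]
      linarith [ht.1]
    have hmem : E^2 ∈ Set.Icc (Esch M ℓ s) (Esch M ℓ s0) := ⟨hle, le_of_lt hEs0⟩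
    obtain ⟨t, ht, hteq⟩ := intermediate_value_Icc (le_of_lt hs0s) (hcont.mono hsub) hmem
    have htlo : r2 < t := by linarith [ht.1]
    rcases huniq t (by simp only [Set.mem_Ioi]; linarith) hteq with h | h | h <;> linarith
  intro τ
  constructor
  · by_contra h
    push_neg at h
    have hle := hbound τ
    have hτr0 : r τ ≤ r0 := by
      by_contra h'
      push_neg at h'
      exact absurd hle (not_le.mpr (hA _ h' h))
    have hmem : rmaxSch M ℓ ∈ Set.uIcc (r τ) (r 0) := by
      rw [Set.mem_uIcc]; left
      exact ⟨by linarith, by linarith [hinit.1]⟩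
    obtain ⟨σ, _, hσ⟩ := intermediate_value_uIcc hrc.continuousOn hmem
    have hb := hbound σ
    rw [hσ] at hb
    linarith
  · by_contra h
    push_neg at h
    exact absurd (hbound τ) (not_le.mpr (hB _ h))
end

section
/- Fix M > 0 and (E, ℓ) with √(8/9) < E < 1 and ℓ_lb(E) < ℓ < ℓ_ub(E). Let r₁ be the middle root of the equation E_ℓ^Sch(r) = E², i.e. the unique solution lying in (r_max^Sch(ℓ), r_min^Sch(ℓ)). Then r₁ > 4M. -/
set_option maxHeartbeats 1000000 in
theorem stmt14 (M ℓ E r1 : ℝ) (hM : 0 < M)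
    (hE1 : Real.sqrt (8/9) < E) (hE2 : E < 1)
    (hℓ1 : llb M E < ℓ) (hℓ2 : ℓ < lub M E)
    (hr1a : rmaxSch M ℓ < r1) (hr1b : r1 < rminSch M ℓ)
    (hroot : Esch M ℓ r1 = E^2) :
    4*M < r1 := by
  by_contra hcon
  push_neg at hcon
  have hE0 : 0 < E := lt_of_le_of_lt (Real.sqrt_nonneg _) hE1
  have hE89 : 8/9 < E^2 := by
    nlinarith [Real.sq_sqrt (show (0:ℝ) ≤ 8/9 by norm_num), Real.sqrt_nonneg (8/9 : ℝ)]
  have hEsq1 : E^2 < 1 := by nlinarith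
  -- lower bound: llb ≥ 12M², hence ℓ > 12M²
  have hllb : 12*M^2 ≤ llb M E := by
    unfold llb
    set A := 9/8*E^2-1 with hA
    clear_value A
    have hA0 : 0 < A := by rw [hA]; nlinarith
    have hA8 : A < 1/8 := by rw [hA]; nlinarith
    have ht0 : 0 ≤ Real.sqrt (A^2+A) := Real.sqrt_nonneg _
    have ht : Real.sqrt (A^2+A) ≤ (1+2*A)/2 := by
      have h1 : A^2+A ≤ ((1+2*A)/2)^2 := by nlinarith
      calc Real.sqrt (A^2+A) ≤ Real.sqrt (((1+2*A)/2)^2) := Real.sqrt_le_sqrt h1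
        _ = (1+2*A)/2 := Real.sqrt_sq (by nlinarith)
    have hAA : A*A < A/8 := by nlinarith
    have hD0 : 0 < 1 - 4*A - 8*A^2 + 8*A*Real.sqrt (A^2+A) := by
      nlinarith [mul_nonneg hA0.le ht0]
    have hD1 : 1 - 4*A - 8*A^2 + 8*A*Real.sqrt (A^2+A) ≤ 1 := by
      nlinarith [mul_le_mul_of_nonneg_left ht (by positivity : (0:ℝ) ≤ 8*A)]
    rw [le_div_iff₀ hD0]
    have := mul_le_mul_of_nonneg_left hD1 (by positivity : (0:ℝ) ≤ 12*M^2)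
    linarith
  have hℓ12 : 12*M^2 < ℓ := lt_of_le_of_lt hllb hℓ1
  have hℓ0 : 0 < ℓ := by nlinarith [sq_nonneg M]
  set s := Real.sqrt (1 - 12*M^2/ℓ) with hsdef
  have hs0 : 0 ≤ s := Real.sqrt_nonneg _
  have harg : 0 ≤ 1 - 12*M^2/ℓ := by
    have : 12*M^2/ℓ ≤ 1 := by rw [div_le_one hℓ0]; linarith
    linarith
  have hs2 : s^2 = 1 - 12*M^2/ℓ := Real.sq_sqrt harg
  have hls : ℓ*s^2 = ℓ - 12*M^2 := by rw [hs2]; field_simp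
  rcases le_or_gt ℓ (16*M^2) with hc | hc
  · -- small ℓ: rmax ≥ 4M, contradiction with rmax < r1 ≤ 4M
    have h8 : (0:ℝ) ≤ 1 - 8*M^2/ℓ := by
      have : 8*M^2/ℓ ≤ 1 := by rw [div_le_one hℓ0]; nlinarith [sq_nonneg M]
      linarith
    have hle : s ≤ 1 - 8*M^2/ℓ := by
      rw [hsdef]
      have hdiff : (1-8*M^2/ℓ)^2 - (1-12*M^2/ℓ) = 4*(M^2/ℓ)*(16*M^2/ℓ - 1) := by
        field_simp; ring
      have h16 : (0:ℝ) ≤ 16*M^2/ℓ - 1 := by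
        have : (1:ℝ) ≤ 16*M^2/ℓ := by rw [le_div_iff₀ hℓ0]; linarith
        linarith
      calc Real.sqrt (1-12*M^2/ℓ) ≤ Real.sqrt ((1-8*M^2/ℓ)^2) := by
            apply Real.sqrt_le_sqrt
            nlinarith [mul_nonneg (by positivity : (0:ℝ) ≤ 4*(M^2/ℓ)) h16]
        _ = 1-8*M^2/ℓ := Real.sqrt_sq h8
    have hrmax : 4*M ≤ rmaxSch M ℓ := by
      unfold rmaxSch
      rw [← hsdef]
      have h2M : (0:ℝ) < ℓ/(2*M) := by positivity
      have heq : ℓ/(2*M) * (8*M^2/ℓ) = 4*M := by field_simp; ring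
      calc 4*M = ℓ/(2*M) * (8*M^2/ℓ) := heq.symm
        _ ≤ ℓ/(2*M) * (1 - s) := by
            apply mul_le_mul_of_nonneg_left _ h2M.le
            have : 8*M^2/ℓ ≤ 1 - s := by linarith
            linarith
    linarith
  · -- large ℓ: ℓ > 16M²
    have hs1 : s < 1 := by nlinarith [sq_nonneg M, div_pos (by positivity : (0:ℝ) < 12*M^2) hℓ0]
    have hrmaxpos : 0 < rmaxSch M ℓ := by
      unfold rmaxSch
      rw [← hsdef]
      have h2M : (0:ℝ) < ℓ/(2*M) := by positivity
      have : 0 < 1 - s := by linarith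
      positivity
    have hr1pos : 0 < r1 := lt_trans hrmaxpos hr1a
    have hrm1 : ℓ*(1-s) < 2*M*r1 := by
      have h := hr1a
      unfold rmaxSch at h
      rw [← hsdef] at h
      have h2M : (0:ℝ) < 2*M := by linarith
      calc ℓ*(1-s) = (ℓ/(2*M)*(1-s)) * (2*M) := by field_simp
        _ < r1 * (2*M) := mul_lt_mul_of_pos_right h h2M
        _ = 2*M*r1 := by ring
    have hrm2 : 2*M*r1 < ℓ*(1+s) := by
      have h := hr1b
      unfold rminSch at h
      rw [← hsdef] at h
      have h2M : (0:ℝ) < 2*M := by linarith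
      calc 2*M*r1 = r1 * (2*M) := by ring
        _ < (ℓ/(2*M)*(1+s)) * (2*M) := mul_lt_mul_of_pos_right h h2M
        _ = ℓ*(1+s) := by field_simp
    have hq1 : M*r1^2 - ℓ*r1 + 3*M*ℓ < 0 := by
      nlinarith [mul_pos (sub_pos.mpr hrm1) (sub_pos.mpr hrm2), hls, hℓ0, hM]
    have hq4 : M*(4*M)^2 - ℓ*(4*M) + 3*M*ℓ < 0 := by nlinarith
    have hf4 : E^2 < Esch M ℓ (4*M) := by
      have heq : Esch M ℓ (4*M) = (16*M^2 + ℓ)/(32*M^2) := by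
        unfold Esch; field_simp; ring
      rw [heq]
      have : (1:ℝ) < (16*M^2 + ℓ)/(32*M^2) := by
        rw [lt_div_iff₀ (by positivity)]; linarith
      linarith
    have key : (E^2 - Esch M ℓ (4*M)) * (r1^3 * (4*M)^3)
        = (4*M - r1) * (M*ℓ*(r1 - 4*M)^2
            - ((4*M)^2*(M*r1^2 - ℓ*r1 + 3*M*ℓ) + r1^2*(M*(4*M)^2 - ℓ*(4*M) + 3*M*ℓ))) := by
      rw [← hroot]
      unfold Esch
      field_simp
      ring
    have hL : (E^2 - Esch M ℓ (4*M)) * (r1^3 * (4*M)^3) < 0 :=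
      mul_neg_of_neg_of_pos (by linarith) (by positivity)
    have h1 : (4*M)^2*(M*r1^2 - ℓ*r1 + 3*M*ℓ) ≤ 0 :=
      mul_nonpos_of_nonneg_of_nonpos (sq_nonneg _) hq1.le
    have h2 : r1^2*(M*(4*M)^2 - ℓ*(4*M) + 3*M*ℓ) ≤ 0 :=
      mul_nonpos_of_nonneg_of_nonpos (sq_nonneg _) hq4.le
    have h3 : (0:ℝ) ≤ M*ℓ*(r1-4*M)^2 := by positivity
    have hR : (0:ℝ) ≤ (4*M - r1) * (M*ℓ*(r1 - 4*M)^2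
            - ((4*M)^2*(M*r1^2 - ℓ*r1 + 3*M*ℓ) + r1^2*(M*(4*M)^2 - ℓ*(4*M) + 3*M*ℓ))) :=
      mul_nonneg (by linarith) (by linarith)
    rw [key] at hL
    linarith
end

section
/- Fix M > 0, and for (E, ℓ) with √(8/9) < E < 1 and ℓ_lb(E) < ℓ < ℓ_ub(E), denote by r₀^Sch(E,ℓ) < r₁^Sch(E,ℓ) < r₂^Sch(E,ℓ) the three roots of E_ℓ^Sch(r) = E² in (2M, ∞). Then: (i) for fixed admissible E and ℓ < ℓ' both admissible, r₀^Sch(E,ℓ') < r₀^Sch(E,ℓ), r₁^Sch(E,ℓ) < r₁^Sch(E,ℓ'), and r₂^Sch(E,ℓ') < r₂^Sch(E,ℓ); (ii) for fixed admissible ℓ and E < E' both admissible, r₀^Sch(E,ℓ) < r₀^Sch(E',ℓ), r₁^Sch(E',ℓ) < r₁^Sch(E,ℓ), and r₂^Sch(E,ℓ) < r₂^Sch(E',ℓ). -/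
/-- A root of `Esch M ℓ r = E²` with `r > 0` is a root of the associated cubic. -/
lemma cubic_root' (M ℓ E r : ℝ) (hr : 0 < r) (h : Esch M ℓ r = E^2) :
    (1-E^2)*r^3 - 2*M*r^2 + ℓ*r - 2*M*ℓ = 0 := by
  have hr0 : r ≠ 0 := ne_of_gt hr
  unfold Esch at h
  field_simp at h
  linarith [h]

/-- A cubic with three distinct roots factors completely. -/
lemma cubic_factor' (u M ℓ a b c : ℝ) (hab : a ≠ b) (hac : a ≠ c) (hbc : b ≠ c)
    (ha : u*a^3 - 2*M*a^2 + ℓ*a - 2*M*ℓ = 0)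
    (hb : u*b^3 - 2*M*b^2 + ℓ*b - 2*M*ℓ = 0)
    (hc : u*c^3 - 2*M*c^2 + ℓ*c - 2*M*ℓ = 0) (x : ℝ) :
    u*x^3 - 2*M*x^2 + ℓ*x - 2*M*ℓ = u*(x-a)*(x-b)*(x-c) := by
  have hD : (a-b)*((a-c)*(b-c)) ≠ 0 :=
    mul_ne_zero (sub_ne_zero.2 hab) (mul_ne_zero (sub_ne_zero.2 hac) (sub_ne_zero.2 hbc))
  apply mul_right_cancel₀ hD
  linear_combination ((x-b)*(x-c)*(b-c)) * ha - ((a-c)*(x-a)*(x-c)) * hb + ((a-b)*(x-a)*(x-b)) * hc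

lemma sign_low' {u a b c x : ℝ} (hu : 0 < u) (hxb : x < b) (hxc : x < c)
    (h : u*(x-a)*(x-b)*(x-c) < 0) : x < a := by
  by_contra hc'
  push_neg at hc'
  nlinarith [mul_pos_of_neg_of_neg (sub_neg.2 hxb) (sub_neg.2 hxc),
    mul_nonneg hu.le (sub_nonneg.2 hc')]

lemma sign_mid_lt' {u a b c x : ℝ} (hu : 0 < u) (hax : a < x) (hxc : x < c)
    (h : 0 < u*(x-a)*(x-b)*(x-c)) : x < b := by
  by_contra hc'
  push_neg at hc'
  nlinarith [mul_pos hu (sub_pos.2 hax), sub_neg.2 hxc, sub_nonneg.2 hc',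
    mul_nonneg (mul_pos hu (sub_pos.2 hax)).le (sub_nonneg.2 hc')]

lemma sign_mid_gt' {u a b c x : ℝ} (hu : 0 < u) (hax : a < x) (hxc : x < c)
    (h : u*(x-a)*(x-b)*(x-c) < 0) : b < x := by
  by_contra hc'
  push_neg at hc'
  nlinarith [mul_pos hu (sub_pos.2 hax), sub_neg.2 hxc, sub_nonneg.2 hc',
    mul_nonneg (mul_pos hu (sub_pos.2 hax)).le (sub_nonneg.2 hc')]

lemma sign_high' {u a b c x : ℝ} (hu : 0 < u) (hax : a < x) (hbx : b < x)
    (h : u*(x-a)*(x-b)*(x-c) < 0) : x < c := by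
  nlinarith [mul_pos (mul_pos hu (sub_pos.2 hax)) (sub_pos.2 hbx)]

lemma llb_ge' (M E : ℝ) (hM : 0 < M) (hE1 : Real.sqrt (8/9) < E) (hE2 : E < 1) :
    12*M^2 ≤ llb M E := by
  have hE0 : 0 < E := lt_of_le_of_lt (Real.sqrt_nonneg _) hE1
  have hE89 : (8:ℝ)/9 < E^2 := (Real.sqrt_lt' hE0).1 hE1
  set α : ℝ := 9/8*E^2-1 with hα
  have hα0 : 0 < α := by simp only [hα]; nlinarith
  have hα1 : α < 1/8 := by simp only [hα]; nlinarith
  set s : ℝ := Real.sqrt (α^2+α) with hsdef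
  have hs0 : 0 ≤ s := Real.sqrt_nonneg _
  have hs2 : s^2 = α^2+α := Real.sq_sqrt (by nlinarith)
  have hshalf : 2*s ≤ 1+2*α := by nlinarith [sq_nonneg (2*s - (1+2*α))]
  have hD0 : 0 < 1 - 4*α - 8*α^2 + 8*α*s := by nlinarith [mul_nonneg hα0.le hs0]
  have hD1 : 1 - 4*α - 8*α^2 + 8*α*s ≤ 1 := by nlinarith [mul_le_mul_of_nonneg_left hshalf hα0.le]
  unfold llb
  rw [le_div_iff₀ hD0]
  nlinarith [sq_nonneg M]

lemma rminmax_mono' (M : ℝ) (hM : 0 < M) {ℓ ℓ' : ℝ} (h12 : 12*M^2 < ℓ) (hll : ℓ < ℓ') :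
    rmaxSch M ℓ' < rmaxSch M ℓ ∧ rminSch M ℓ < rminSch M ℓ' := by
  have hM2 : 0 < 12*M^2 := by positivity
  have hℓ0 : 0 < ℓ := hM2.trans h12
  have hℓ'0 : 0 < ℓ' := hℓ0.trans hll
  set s : ℝ := Real.sqrt (1 - 12*M^2/ℓ) with hsdef
  set s' : ℝ := Real.sqrt (1 - 12*M^2/ℓ') with hs'def
  have harg : 0 ≤ 1 - 12*M^2/ℓ := by
    rw [sub_nonneg]; exact (div_le_one hℓ0).2 h12.le
  have hdd : 12*M^2/ℓ' < 12*M^2/ℓ := div_lt_div_of_pos_left hM2 hℓ0 hll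
  have harg' : 0 ≤ 1 - 12*M^2/ℓ' := by linarith
  have hss' : s < s' := Real.sqrt_lt_sqrt harg (by linarith)
  have hs0 : 0 ≤ s := Real.sqrt_nonneg _
  have hs2 : s^2 = 1 - 12*M^2/ℓ := Real.sq_sqrt harg
  have hs'2 : s'^2 = 1 - 12*M^2/ℓ' := Real.sq_sqrt harg'
  have hs'1 : s' < 1 := by
    have : 0 < 12*M^2/ℓ' := by positivity
    nlinarith
  have hs1 : s < 1 := hss'.trans hs'1
  have hA : ℓ * (1 - s^2) = 12*M^2 := by
    rw [hs2]; field_simp; ring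
  have hB : ℓ' * (1 - s'^2) = 12*M^2 := by
    rw [hs'2]; field_simp; ring
  have hrmax : rmaxSch M ℓ = 6*M/(1+s) := by
    unfold rmaxSch; rw [← hsdef]
    field_simp
    linear_combination hA
  have hrmax' : rmaxSch M ℓ' = 6*M/(1+s') := by
    unfold rmaxSch; rw [← hs'def]
    have hs'0 : 0 ≤ s' := Real.sqrt_nonneg _
    field_simp
    linear_combination hB
  have hrmin : rminSch M ℓ = 6*M/(1-s) := by
    unfold rminSch; rw [← hsdef]
    have h1s : (1:ℝ) - s ≠ 0 := by nlinarith
    field_simp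
    linear_combination hA
  have hrmin' : rminSch M ℓ' = 6*M/(1-s') := by
    unfold rminSch; rw [← hs'def]
    have h1s' : (1:ℝ) - s' ≠ 0 := by nlinarith
    field_simp
    linear_combination hB
  constructor
  · rw [hrmax, hrmax']
    exact div_lt_div_of_pos_left (by positivity) (by linarith) (by linarith)
  · rw [hrmin, hrmin']
    exact div_lt_div_of_pos_left (by positivity) (by linarith) (by linarith)

theorem stmt15 (M : ℝ) (hM : 0 < M)
    (r0 r1 r2 : ℝ → ℝ → ℝ)
    (hroots : ∀ E ℓ : ℝ, Real.sqrt (8/9) < E → E < 1 → llb M E < ℓ → ℓ < lub M E →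
      2*M < r0 E ℓ ∧ r0 E ℓ < rmaxSch M ℓ ∧ rmaxSch M ℓ < r1 E ℓ ∧ r1 E ℓ < rminSch M ℓ ∧
      rminSch M ℓ < r2 E ℓ ∧
      Esch M ℓ (r0 E ℓ) = E^2 ∧ Esch M ℓ (r1 E ℓ) = E^2 ∧ Esch M ℓ (r2 E ℓ) = E^2) :
    (∀ E ℓ ℓ' : ℝ, Real.sqrt (8/9) < E → E < 1 →
       llb M E < ℓ → ℓ < lub M E → llb M E < ℓ' → ℓ' < lub M E → ℓ < ℓ' →
       r0 E ℓ' < r0 E ℓ ∧ r1 E ℓ < r1 E ℓ' ∧ r2 E ℓ' < r2 E ℓ) ∧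
    (∀ E E' ℓ : ℝ, Real.sqrt (8/9) < E → E < 1 → Real.sqrt (8/9) < E' → E' < 1 →
       llb M E < ℓ → ℓ < lub M E → llb M E' < ℓ → ℓ < lub M E' → E < E' →
       r0 E ℓ < r0 E' ℓ ∧ r1 E' ℓ < r1 E ℓ ∧ r2 E ℓ < r2 E' ℓ) := by
  constructor
  · intro E ℓ ℓ' hE1 hE2 hl1 hl2 hl1' hl2' hll
    obtain ⟨h2M, hr0max, hmaxr1, hr1min, hminr2, he0, he1, he2⟩ :=
      hroots E ℓ hE1 hE2 hl1 hl2
    obtain ⟨h2M', hr0max', hmaxr1', hr1min', hminr2', he0', he1', he2'⟩ :=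
      hroots E ℓ' hE1 hE2 hl1' hl2'
    have hE0 : 0 < E := lt_of_le_of_lt (Real.sqrt_nonneg _) hE1
    have hu : 0 < 1 - E^2 := by nlinarith
    have h12 : 12*M^2 < ℓ := lt_of_le_of_lt (llb_ge' M E hM hE1 hE2) hl1
    obtain ⟨hmaxmono, hminmono⟩ := rminmax_mono' M hM h12 hll
    -- roots of the two cubics
    have p0 := cubic_root' M ℓ E _ (by linarith) he0
    have p1 := cubic_root' M ℓ E _ (by linarith [hmaxr1, hr0max, h2M]) he1
    have p2 := cubic_root' M ℓ E _ (by linarith) he2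
    have p0' := cubic_root' M ℓ' E _ (by linarith) he0'
    have p1' := cubic_root' M ℓ' E _ (by linarith) he1'
    have p2' := cubic_root' M ℓ' E _ (by linarith) he2'
    have o01 : r0 E ℓ < r1 E ℓ := hr0max.trans hmaxr1
    have o12 : r1 E ℓ < r2 E ℓ := hr1min.trans hminr2
    have o01' : r0 E ℓ' < r1 E ℓ' := hr0max'.trans hmaxr1'
    have o12' : r1 E ℓ' < r2 E ℓ' := hr1min'.trans hminr2'
    have fac := cubic_factor' (1-E^2) M ℓ _ _ _ (ne_of_lt o01) (ne_of_lt (o01.trans o12))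
      (ne_of_lt o12) p0 p1 p2
    have fac' := cubic_factor' (1-E^2) M ℓ' _ _ _ (ne_of_lt o01') (ne_of_lt (o01'.trans o12'))
      (ne_of_lt o12') p0' p1' p2'
    -- useful comparisons
    have c1 : r0 E ℓ' < r1 E ℓ := by linarith
    have c2 : r0 E ℓ' < r2 E ℓ := by linarith
    have c3 : r0 E ℓ' < r0 E ℓ := by
      refine sign_low' hu c1 c2 ?_
      rw [← fac (r0 E ℓ')]
      have heq : (1-E^2)*(r0 E ℓ')^3 - 2*M*(r0 E ℓ')^2 + ℓ*(r0 E ℓ') - 2*M*ℓ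
          = (ℓ-ℓ')*(r0 E ℓ' - 2*M) := by linear_combination p0'
      rw [heq]
      exact mul_neg_of_neg_of_pos (by linarith) (by linarith)
    refine ⟨c3, ?_, ?_⟩
    · have d1 : r0 E ℓ' < r1 E ℓ := c1
      have d2 : r1 E ℓ < r2 E ℓ' := by linarith
      refine sign_mid_lt' hu d1 d2 ?_
      have heq : (1-E^2)*(r1 E ℓ - r0 E ℓ')*(r1 E ℓ - r1 E ℓ')*(r1 E ℓ - r2 E ℓ')
          = (ℓ'-ℓ)*(r1 E ℓ - 2*M) := by
        rw [← fac' (r1 E ℓ)]; linear_combination p1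
      rw [heq]
      exact mul_pos (by linarith) (by linarith)
    · have d1 : r0 E ℓ < r2 E ℓ' := by linarith
      have d2 : r1 E ℓ < r2 E ℓ' := by linarith
      refine sign_high' hu d1 d2 ?_
      rw [← fac (r2 E ℓ')]
      have heq : (1-E^2)*(r2 E ℓ')^3 - 2*M*(r2 E ℓ')^2 + ℓ*(r2 E ℓ') - 2*M*ℓ
          = (ℓ-ℓ')*(r2 E ℓ' - 2*M) := by linear_combination p2'
      rw [heq]
      exact mul_neg_of_neg_of_pos (by linarith) (by linarith)
  · intro E E' ℓ hE1 hE2 hE1' hE2' hl1 hl2 hl1' hl2' hEE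
    obtain ⟨h2M, hr0max, hmaxr1, hr1min, hminr2, he0, he1, he2⟩ :=
      hroots E ℓ hE1 hE2 hl1 hl2
    obtain ⟨h2M', hr0max', hmaxr1', hr1min', hminr2', he0', he1', he2'⟩ :=
      hroots E' ℓ hE1' hE2' hl1' hl2'
    have hE0 : 0 < E := lt_of_le_of_lt (Real.sqrt_nonneg _) hE1
    have hE0' : 0 < E' := hE0.trans hEE
    have hu' : 0 < 1 - E'^2 := by nlinarith
    have hEE2 : E^2 < E'^2 := by nlinarith
    have p0 := cubic_root' M ℓ E _ (by linarith) he0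
    have p1 := cubic_root' M ℓ E _ (by linarith) he1
    have p2 := cubic_root' M ℓ E _ (by linarith) he2
    have p0' := cubic_root' M ℓ E' _ (by linarith) he0'
    have p1' := cubic_root' M ℓ E' _ (by linarith) he1'
    have p2' := cubic_root' M ℓ E' _ (by linarith) he2'
    have o01' : r0 E' ℓ < r1 E' ℓ := hr0max'.trans hmaxr1'
    have o12' : r1 E' ℓ < r2 E' ℓ := hr1min'.trans hminr2'
    have fac' := cubic_factor' (1-E'^2) M ℓ _ _ _ (ne_of_lt o01') (ne_of_lt (o01'.trans o12'))
      (ne_of_lt o12') p0' p1' p2'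
    have hkey : ∀ x : ℝ, 0 < x → (1-E^2)*x^3 - 2*M*x^2 + ℓ*x - 2*M*ℓ = 0 →
        (1-E'^2)*(x - r0 E' ℓ)*(x - r1 E' ℓ)*(x - r2 E' ℓ) < 0 := by
      intro x hx hPx
      have heq : (1-E'^2)*(x - r0 E' ℓ)*(x - r1 E' ℓ)*(x - r2 E' ℓ)
          = (E^2 - E'^2)*x^3 := by
        rw [← fac' x]; linear_combination hPx
      rw [heq]
      exact mul_neg_of_neg_of_pos (by linarith) (by positivity)
    refine ⟨?_, ?_, ?_⟩
    · refine sign_low' hu' (by linarith) (by linarith)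
        (hkey (r0 E ℓ) (by linarith) p0)
    · refine sign_mid_gt' hu' (by linarith) (by linarith)
        (hkey (r1 E ℓ) (by linarith) p1)
    · refine sign_high' hu' (by linarith) (by linarith)
        (hkey (r2 E ℓ) (by linarith) p2)
end
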